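/- Let L > 0, μ > 0, let g^u, g^v ∈ C³([0,L];ℝ) with (g^u)'(x) ≥ μ for all x ∈ [0,L], let â ∈ C¹([0,L];ℝ) with â(L) = 0, let f̂ : ℝ → ℝ be continuously differentiable, and let ǔ, v̌ ∈ C¹([0,L];ℝ). Assume (â·(g^u)')'(x) + f̂(g^u(x)) = ǔ(x) and (â·(g^v)')'(x) + f̂(g^v(x)) = v̌(x) for all x ∈ [0,L]. Set G(x) = (g^v)'(x)/(g^u)'(x). Then for all x ∈ [0,L]: (f̂'(g^v(x)) − f̂'(g^u(x)))·(g^v)'(x) − 2 G'(x)·f̂(g^u(x)) + G''(x)·∫_x^L f̂(g^u(ξ)) dξ = v̌'(x) − G(x)·ǔ'(x) − 2 G'(x)·ǔ(x) + G''(x)·∫_x^L ǔ(ξ) dξ. -/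

import Mathlib

open Set intervalIntegral

/-- The twice-differentiated Volterra-type identity for the nonlinearity difference
`fhat`, with `G = (g^v)'/(g^u)'`. -/
theorem differentiated_volterra_identity_for_fhat
    (L μ : ℝ) (hL : 0 < L) (hμ : 0 < μ)
    (gu gv : ℝ → ℝ) (hgu : ContDiff ℝ 3 gu) (hgv : ContDiff ℝ 3 gv)
    (hgu' : ∀ x ∈ Icc (0:ℝ) L, μ ≤ deriv gu x)
    (ahat : ℝ → ℝ) (hahat : ContDiff ℝ 1 ahat) (hahatL : ahat L = 0)
    (fhat : ℝ → ℝ) (hfhat : ContDiff ℝ 1 fhat)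
    (ucheck vcheck : ℝ → ℝ) (hucheck : ContDiff ℝ 1 ucheck) (hvcheck : ContDiff ℝ 1 vcheck)
    (hequ : ∀ x ∈ Icc (0:ℝ) L,
      deriv (fun y => ahat y * deriv gu y) x + fhat (gu x) = ucheck x)
    (heqv : ∀ x ∈ Icc (0:ℝ) L,
      deriv (fun y => ahat y * deriv gv y) x + fhat (gv x) = vcheck x) :
    ∀ x ∈ Icc (0:ℝ) L,
      (deriv fhat (gv x) - deriv fhat (gu x)) * deriv gv x -
        2 * deriv (fun y => deriv gv y / deriv gu y) x * fhat (gu x) +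
        deriv (deriv (fun y => deriv gv y / deriv gu y)) x * (∫ ξ in x..L, fhat (gu ξ)) =
      deriv vcheck x - (deriv gv x / deriv gu x) * deriv ucheck x -
        2 * deriv (fun y => deriv gv y / deriv gu y) x * ucheck x +
        deriv (deriv (fun y => deriv gv y / deriv gu y)) x * (∫ ξ in x..L, ucheck ξ) := by
  -- regularity of deriv gu, deriv gv
  have hgu2 : ContDiff ℝ 2 (deriv gu) := by
    have h : ContDiff ℝ (2+1) gu := by norm_num; exact hgu
    exact (contDiff_succ_iff_deriv.mp h).2.2
  have hgv2 : ContDiff ℝ 2 (deriv gv) := by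
    have h : ContDiff ℝ (2+1) gv := by norm_num; exact hgv
    exact (contDiff_succ_iff_deriv.mp h).2.2
  -- the open set where deriv gu ≠ 0
  set S : Set ℝ := {y | deriv gu y ≠ 0} with hSdef
  have hS : IsOpen S := isOpen_compl_singleton.preimage hgu2.continuous
  have hsub : Icc (0:ℝ) L ⊆ S := fun y hy => ne_of_gt (lt_of_lt_of_le hμ (hgu' y hy))
  -- G and its regularity
  set G : ℝ → ℝ := fun y => deriv gv y / deriv gu y with hGdef
  have hGcd : ContDiffOn ℝ 2 G S := hgv2.contDiffOn.div hgu2.contDiffOn (fun y hy => hy)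
  have hG'cd : ContDiffOn ℝ 1 (deriv G) S := hGcd.deriv_of_isOpen hS (by norm_num)
  have hGdiff : ∀ y ∈ Icc (0:ℝ) L, DifferentiableAt ℝ G y := fun y hy =>
    (hGcd.differentiableOn (by norm_num)).differentiableAt (hS.mem_nhds (hsub hy))
  have hG'diff : ∀ y ∈ Icc (0:ℝ) L, DifferentiableAt ℝ (deriv G) y := fun y hy =>
    (hG'cd.differentiableOn (by norm_num)).differentiableAt (hS.mem_nhds (hsub hy))
  -- a * gu' regularity
  have hagC1 : ContDiff ℝ 1 (fun t => ahat t * deriv gu t) :=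
    hahat.mul (hgu2.of_le (by norm_num))
  have hagD : Differentiable ℝ (fun t => ahat t * deriv gu t) :=
    hagC1.differentiable (by norm_num)
  have hagderivC : Continuous (deriv (fun t => ahat t * deriv gu t)) :=
    (contDiff_one_iff_deriv.mp hagC1).2
  -- the continuous integrand
  have hh : Continuous (fun ξ => fhat (gu ξ) - ucheck ξ) :=
    ((hfhat.continuous).comp hgu.continuous).sub hucheck.continuous
  -- the key function Φ
  set Φ : ℝ → ℝ := fun y =>
    fhat (gv y) - vcheck y - G y * (fhat (gu y) - ucheck y) +
      deriv G y * ∫ ξ in y..L, (fhat (gu ξ) - ucheck ξ) with hΦdef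
  -- Step A: the integral identity
  have hint : ∀ y ∈ Icc (0:ℝ) L,
      (∫ ξ in y..L, (fhat (gu ξ) - ucheck ξ)) = ahat y * deriv gu y := by
    intro y hy
    have huIcc : uIcc y L ⊆ Icc (0:ℝ) L := by
      rw [uIcc_of_le hy.2]
      exact Icc_subset_Icc hy.1 le_rfl
    have hcong : ∀ ξ ∈ uIcc y L,
        fhat (gu ξ) - ucheck ξ = -(deriv (fun t => ahat t * deriv gu t) ξ) := by
      intro ξ hξ
      have := hequ ξ (huIcc hξ)
      linarith
    rw [intervalIntegral.integral_congr hcong, intervalIntegral.integral_neg,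
      intervalIntegral.integral_deriv_eq_sub (fun t _ => hagD t)
        (hagderivC.intervalIntegrable y L)]
    simp [hahatL]
  -- Step B: Φ vanishes on Icc 0 L
  have hΦ0 : ∀ y ∈ Icc (0:ℝ) L, Φ y = 0 := by
    intro y hy
    have e1 : fhat (gu y) - ucheck y = -(deriv (fun t => ahat t * deriv gu t) y) := by
      have := hequ y hy; linarith
    have e2 : fhat (gv y) - vcheck y = -(deriv (fun t => ahat t * deriv gv t) y) := by
      have := heqv y hy; linarith
    have e3 : deriv (fun t => ahat t * deriv gv t) y =
        deriv G y * (ahat y * deriv gu y) + G y * deriv (fun t => ahat t * deriv gu t) y := by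
      have heq : (fun t => ahat t * deriv gv t) =ᶠ[nhds y]
          (fun t => G t * (ahat t * deriv gu t)) := by
        filter_upwards [hS.mem_nhds (hsub hy)] with t ht
        have ht' : deriv gu t ≠ 0 := ht
        simp only [hGdef]
        field_simp
      rw [heq.deriv_eq]
      exact ((hGdiff y hy).hasDerivAt.mul (hagD y).hasDerivAt).deriv
    rw [hΦdef]
    simp only
    rw [hint y hy, e1, e2, e3]
    ring
  -- Step C: derivative of Φ at x
  intro x hx
  have hDgv : HasDerivAt (fun y => fhat (gv y)) (deriv fhat (gv x) * deriv gv x) x :=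
    HasDerivAt.comp x (hfhat.differentiable (by norm_num) _).hasDerivAt
      (hgv.differentiable (by norm_num) _).hasDerivAt
  have hDgu : HasDerivAt (fun y => fhat (gu y)) (deriv fhat (gu x) * deriv gu x) x :=
    HasDerivAt.comp x (hfhat.differentiable (by norm_num) _).hasDerivAt
      (hgu.differentiable (by norm_num) _).hasDerivAt
  have hDv : HasDerivAt vcheck (deriv vcheck x) x :=
    (hvcheck.differentiable (by norm_num) x).hasDerivAt
  have hDu : HasDerivAt ucheck (deriv ucheck x) x :=
    (hucheck.differentiable (by norm_num) x).hasDerivAt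
  have hDh : HasDerivAt (fun y => fhat (gu y) - ucheck y)
      (deriv fhat (gu x) * deriv gu x - deriv ucheck x) x := hDgu.sub hDu
  have hDG : HasDerivAt G (deriv G x) x := (hGdiff x hx).hasDerivAt
  have hDG' : HasDerivAt (deriv G) (deriv (deriv G) x) x := (hG'diff x hx).hasDerivAt
  have hDI : HasDerivAt (fun y => ∫ ξ in y..L, (fhat (gu ξ) - ucheck ξ))
      (-(fhat (gu x) - ucheck x)) x :=
    intervalIntegral.integral_hasDerivAt_left (hh.intervalIntegrable x L)
      (hh.stronglyMeasurableAtFilter _ _) hh.continuousAt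
  have hDΦ : HasDerivAt Φ
      (deriv fhat (gv x) * deriv gv x - deriv vcheck x -
        (deriv G x * (fhat (gu x) - ucheck x) +
          G x * (deriv fhat (gu x) * deriv gu x - deriv ucheck x)) +
        (deriv (deriv G) x * (∫ ξ in x..L, (fhat (gu ξ) - ucheck ξ)) +
          deriv G x * (-(fhat (gu x) - ucheck x)))) x :=
    ((hDgv.sub hDv).sub (hDG.mul hDh)).add (hDG'.mul hDI)
  -- Step D: the derivative is 0
  have hud : UniqueDiffWithinAt ℝ (Icc (0:ℝ) L) x := (uniqueDiffOn_Icc hL) x hx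
  have hzero : HasDerivWithinAt Φ 0 (Icc (0:ℝ) L) x :=
    (hasDerivWithinAt_const x _ (0:ℝ)).congr (fun y hy => hΦ0 y hy) (hΦ0 x hx)
  have hD0 : (deriv fhat (gv x) * deriv gv x - deriv vcheck x -
        (deriv G x * (fhat (gu x) - ucheck x) +
          G x * (deriv fhat (gu x) * deriv gu x - deriv ucheck x)) +
        (deriv (deriv G) x * (∫ ξ in x..L, (fhat (gu ξ) - ucheck ξ)) +
          deriv G x * (-(fhat (gu x) - ucheck x)))) = 0 := by
    have h1 := hDΦ.hasDerivWithinAt.derivWithin hud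
    have h2 := hzero.derivWithin hud
    rw [h1] at h2; exact h2
  -- Step E: conclude
  have hne : deriv gu x ≠ 0 := hsub hx
  have h1 : deriv gv x / deriv gu x * deriv gu x = deriv gv x := div_mul_cancel₀ _ hne
  have hI : (∫ ξ in x..L, (fhat (gu ξ) - ucheck ξ)) =
      (∫ ξ in x..L, fhat (gu ξ)) - ∫ ξ in x..L, ucheck ξ :=
    intervalIntegral.integral_sub
      (((hfhat.continuous).comp hgu.continuous).intervalIntegrable x L)
      (hucheck.continuous.intervalIntegrable x L)
  rw [hI] at hD0
  have hGx : G x = deriv gv x / deriv gu x := rfl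
  rw [hGx] at hD0
  linear_combination hD0 + deriv fhat (gu x) * h1
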